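/- For every integer n ≥ 4 and H ≥ 2, the number of monic degenerate polynomials of degree n and height at most H which have a linear factor over ℚ is O(H^{n-2}), where the implied constant depends only on n. -/

import Mathlib

open Polynomial Finset IntermediateField


lemma exists_totient_bound (N : ℕ) : ∃ K : ℕ, 0 < K ∧ ∀ m : ℕ, 0 < m → Nat.totient m ≤ N → m ≤ K := by
  refine ⟨((N+1)*(N+1)) ^ (N+2), by positivity, fun m hm hN => ?_⟩
  have hm0 : m ≠ 0 := hm.ne'
  have hkey : ∀ p ∈ m.primeFactors, p ≤ N + 1 ∧ p ^ m.factorization p ≤ (N+1)*(N+1) := by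
    intro p hp
    have hpp : p.Prime := Nat.prime_of_mem_primeFactors hp
    have hv : 0 < m.factorization p := (Nat.Prime.factorization_pos_of_dvd hpp hm0
      (Nat.dvd_of_mem_primeFactors hp))
    have hdvd : p ^ m.factorization p ∣ m := Nat.ordProj_dvd m p
    have h1 : Nat.totient (p ^ m.factorization p) ∣ Nat.totient m := Nat.totient_dvd_of_dvd hdvd
    have h2 : Nat.totient (p ^ m.factorization p) ≤ N := le_trans (Nat.le_of_dvd
      (Nat.totient_pos.2 hm) h1) hN
    rw [Nat.totient_prime_pow hpp hv] at h2
    obtain ⟨q, hq⟩ : ∃ q, p = q + 2 := ⟨p - 2, by have := hpp.two_le; omega⟩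
    subst hq
    have hpow1 : 1 ≤ (q+2) ^ (m.factorization (q+2) - 1) := Nat.one_le_pow _ _ (by omega)
    have hple : q + 1 ≤ N := by
      have : (q+2) - 1 = q + 1 := by omega
      rw [this] at h2; nlinarith
    refine ⟨by omega, ?_⟩
    have hpow : (q+2) ^ (m.factorization (q+2) - 1) ≤ N + 1 := by
      have : (q+2) - 1 = q + 1 := by omega
      rw [this] at h2; nlinarith
    calc (q+2) ^ m.factorization (q+2) = (q+2) ^ (m.factorization (q+2) - 1) * (q+2) := by
          rw [← pow_succ]; congr 1; omega
      _ ≤ (N+1) * (N+1) := Nat.mul_le_mul hpow (by omega)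
  have hsub : m.primeFactors ⊆ Finset.range (N+2) := by
    intro p hp
    simp only [Finset.mem_range]
    have := (hkey p hp).1; omega
  calc m = ∏ p ∈ m.primeFactors, p ^ m.factorization p := by
        conv_lhs => rw [← Nat.factorization_prod_pow_eq_self hm0]
        rw [Finsupp.prod, Nat.support_factorization]
    _ ≤ ∏ p ∈ m.primeFactors, ((N+1)*(N+1)) := Finset.prod_le_prod' (fun p hp => (hkey p hp).2)
    _ = ((N+1)*(N+1)) ^ m.primeFactors.card := by rw [Finset.prod_const]
    _ ≤ ((N+1)*(N+1)) ^ (N+2) := Nat.pow_le_pow_right (by positivity)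
        (le_trans (Finset.card_le_card hsub) (by simp))


set_option maxHeartbeats 1000000 in
lemma ratio_bound (n : ℕ) (hn : 0 < n) :
    ∃ L : ℕ, 0 < L ∧ ∀ (f : Polynomial ℤ) (α β : ℂ) (k : ℕ), f.Monic → f.natDegree = n →
      Polynomial.aeval α f = 0 → Polynomial.aeval β f = 0 → 0 < k → (α / β) ^ k = 1 →
      (α / β) ^ L = 1 := by
  obtain ⟨K, hK0, hK⟩ := exists_totient_bound (n * n)
  refine ⟨K.factorial, K.factorial_pos, fun f α β k hmon hdeg hα hβ hk hpow => ?_⟩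
  set ζ : ℂ := α / β with hζ
  have hζ0 : ζ ≠ 0 := by
    intro h0; rw [h0] at hpow; simp [zero_pow hk.ne'] at hpow
  have hβ0 : β ≠ 0 := by intro h; rw [h] at hζ; simp [hζ] at hζ0
  have hfin : IsOfFinOrder ζ := isOfFinOrder_iff_pow_eq_one.2 ⟨k, hk, hpow⟩
  set d : ℕ := orderOf ζ with hd
  have hd0 : 0 < d := hfin.orderOf_pos
  have hprim : IsPrimitiveRoot ζ d := IsPrimitiveRoot.orderOf ζ
  have htot : Nat.totient d ≤ (minpoly ℤ ζ).natDegree := hprim.totient_le_degree_minpoly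
  have hint : IsIntegral ℤ ζ := hprim.isIntegral hd0
  have heq : minpoly ℚ ζ = (minpoly ℤ ζ).map (algebraMap ℤ ℚ) := by
    have := minpoly.isIntegrallyClosed_eq_field_fractions ℚ ℂ (R := ℤ) (S := ℂ) hint
    · simpa using this
  have hndeg : (minpoly ℤ ζ).natDegree = (minpoly ℚ ζ).natDegree := by
    rw [heq, Polynomial.natDegree_map_eq_of_injective
      (fun a b hab => by exact_mod_cast hab : Function.Injective (algebraMap ℤ ℚ))]
  have hmap : (f.map (algebraMap ℤ ℚ)).Monic := hmon.map _
  have hmapdeg : (f.map (algebraMap ℤ ℚ)).natDegree = n := by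
    rw [Polynomial.natDegree_map_eq_of_injective
      (fun a b hab => by exact_mod_cast hab : Function.Injective (algebraMap ℤ ℚ))]
    exact hdeg
  have hαi : IsIntegral ℚ α := ⟨f.map (algebraMap ℤ ℚ), hmap, by
    rw [← Polynomial.aeval_def, Polynomial.aeval_map_algebraMap]; exact hα⟩
  have hβi : IsIntegral ℚ β := ⟨f.map (algebraMap ℤ ℚ), hmap, by
    rw [← Polynomial.aeval_def, Polynomial.aeval_map_algebraMap]; exact hβ⟩
  have hmindegα : (minpoly ℚ α).natDegree ≤ n := by
    have hdvd : minpoly ℚ α ∣ f.map (algebraMap ℤ ℚ) := minpoly.dvd ℚ α (by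
      rw [Polynomial.aeval_map_algebraMap]; exact hα)
    calc (minpoly ℚ α).natDegree ≤ (f.map (algebraMap ℤ ℚ)).natDegree :=
        Polynomial.natDegree_le_of_dvd hdvd hmap.ne_zero
      _ = n := hmapdeg
  have hmindegβ : (minpoly ℚ β).natDegree ≤ n := by
    have hdvd : minpoly ℚ β ∣ f.map (algebraMap ℤ ℚ) := minpoly.dvd ℚ β (by
      rw [Polynomial.aeval_map_algebraMap]; exact hβ)
    calc (minpoly ℚ β).natDegree ≤ (f.map (algebraMap ℤ ℚ)).natDegree :=
        Polynomial.natDegree_le_of_dvd hdvd hmap.ne_zero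
      _ = n := hmapdeg
  let F : IntermediateField ℚ ℂ := ℚ⟮α⟯
  haveI hFfd : FiniteDimensional ℚ F := IntermediateField.adjoin.finiteDimensional hαi
  have hβF : IsIntegral F β := hβi.tower_top
  let E : IntermediateField F ℂ := F⟮β⟯
  haveI hEfd : FiniteDimensional F E := IntermediateField.adjoin.finiteDimensional hβF
  haveI : FiniteDimensional ℚ E := FiniteDimensional.trans ℚ F E
  have hfr : Module.finrank ℚ E ≤ n * n := by
    have h1 : Module.finrank ℚ F = (minpoly ℚ α).natDegree := IntermediateField.adjoin.finrank hαi
    have h2 : Module.finrank F E = (minpoly F β).natDegree := IntermediateField.adjoin.finrank hβF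
    have h3 : (minpoly F β).natDegree ≤ (minpoly ℚ β).natDegree := by
      have hdvd := minpoly.dvd_map_of_isScalarTower ℚ F β
      have hne : ((minpoly ℚ β).map (algebraMap ℚ F)) ≠ 0 :=
        Polynomial.map_ne_zero (minpoly.ne_zero hβi)
      calc (minpoly F β).natDegree ≤ ((minpoly ℚ β).map (algebraMap ℚ F)).natDegree :=
          Polynomial.natDegree_le_of_dvd hdvd hne
        _ = (minpoly ℚ β).natDegree := Polynomial.natDegree_map_eq_of_injective
            (algebraMap ℚ F).injective _
    calc Module.finrank ℚ E = Module.finrank ℚ F * Module.finrank F E :=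
        (Module.finrank_mul_finrank ℚ F E).symm
      _ ≤ n * n := Nat.mul_le_mul (h1 ▸ hmindegα) (h2 ▸ le_trans h3 hmindegβ)
  have hζE : ζ ∈ E := by
    have hαF : α ∈ F := IntermediateField.mem_adjoin_simple_self ℚ α
    have hαE : α ∈ E := by
      have h := E.algebraMap_mem (⟨α, hαF⟩ : F)
      exact h
    have hβE : β ∈ E := IntermediateField.mem_adjoin_simple_self F β
    rw [hζ, div_eq_mul_inv]
    exact mul_mem hαE (inv_mem hβE)
  have hdegζ : (minpoly ℚ ζ).natDegree ≤ n * n := by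
    have hz : ζ = algebraMap E ℂ (⟨ζ, hζE⟩ : E) := rfl
    rw [hz, minpoly.algebraMap_eq (algebraMap E ℂ).injective]
    exact le_trans (minpoly.natDegree_le _) hfr
  have : Nat.totient d ≤ n * n := by omega
  have hdK : d ≤ K := hK d hd0 this
  have hdvd : d ∣ K.factorial := Nat.dvd_factorial hd0 hdK
  exact orderOf_dvd_iff_pow_eq_one.1 (hd ▸ hdvd)



attribute [local instance] Classical.propDecidable

noncomputable def hval (M : ℕ) (b : Fin (M+2) → ℤ) (z : ℂ) : ℂ :=
  z ^ (M+2) + ∑ i : Fin (M+2), (b i : ℂ) * z ^ (i : ℕ)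

noncomputable abbrev ibox (T : ℕ) : Finset ℤ := Finset.Icc (-(T:ℤ)) (T:ℤ)

lemma card_ibox (T : ℕ) : (ibox T).card = 2*T+1 := by
  show (Finset.Icc (-(T:ℤ)) (T:ℤ)).card = 2*T+1
  rw [Int.card_Icc]; omega

lemma hval_split (M : ℕ) (b : Fin (M+2) → ℤ) (z : ℂ) :
    hval M b z = (b 0 : ℂ) + (z ^ (M+2) + ∑ i : Fin (M+1), (b i.succ : ℂ) * z ^ ((i : ℕ)+1)) := by
  rw [hval, Fin.sum_univ_succ]
  simp only [Fin.val_succ, Fin.val_zero, pow_zero, mul_one]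
  ring

lemma card_det {K T : ℕ} (F : Finset (Fin (K+1) → ℤ))
    (hF : ∀ b ∈ F, ∀ i, b i ∈ ibox T)
    (G : (Fin K → ℤ) → ℂ)
    (hdet : ∀ b ∈ F, (b 0 : ℂ) = G (fun i => b i.succ)) :
    F.card ≤ (2*T+1) ^ K := by
  have h : F.card ≤ (Fintype.piFinset (fun _ : Fin K => ibox T)).card := by
    apply Finset.card_le_card_of_injOn (fun b (i : Fin K) => b i.succ)
    · intro b hb
      rw [Finset.mem_coe, Fintype.mem_piFinset]
      intro i; exact hF b hb i.succ
    · intro b1 h1 b2 h2 heq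
      have heq' : (fun i : Fin K => b1 i.succ) = (fun i : Fin K => b2 i.succ) := heq
      have h0 : b1 0 = b2 0 := by
        have e1 := hdet b1 h1
        have e2 := hdet b2 h2
        rw [heq'] at e1
        exact_mod_cast e1.trans e2.symm
      funext i
      refine Fin.cases h0 (fun j => ?_) i
      exact congrFun heq' j
  rw [Fintype.card_piFinset] at h
  simpa only [Finset.prod_const, Finset.card_univ, Fintype.card_fin, card_ibox] using h

lemma countA (M T : ℕ) (w : ℂ) :
    ((Fintype.piFinset (fun _ : Fin (M+2) => ibox T)).filter (fun b => hval M b w = 0)).card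
      ≤ (2*T+1) ^ (M+1) := by
  refine card_det _ ?_ (fun t => -(w^(M+2) + ∑ i : Fin (M+1), (t i : ℂ) * w^((i:ℕ)+1))) ?_
  · intro b hb i
    exact (Fintype.mem_piFinset.1 (Finset.mem_filter.1 hb).1) i
  · intro b hb
    have h := (Finset.mem_filter.1 hb).2
    rw [hval_split] at h
    exact eq_neg_of_add_eq_zero_left h

noncomputable def ppoly (M : ℕ) (ζ : ℂ) (t : Fin (M+1) → ℤ) : Polynomial ℂ :=
  C (1 - ζ^(M+2)) * X^(M+2) + ∑ i : Fin (M+1), C ((t i : ℂ) * (1 - ζ^((i:ℕ)+1))) * X^((i:ℕ)+1)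

lemma ppoly_eval (M : ℕ) (ζ : ℂ) (b : Fin (M+2) → ℤ) (y : ℂ) :
    (ppoly M ζ (fun i => b i.succ)).eval y = hval M b y - hval M b (ζ*y) := by
  rw [ppoly, hval, hval]
  simp only [Polynomial.eval_add, Polynomial.eval_mul, Polynomial.eval_C, Polynomial.eval_pow,
    Polynomial.eval_X, Polynomial.eval_finset_sum]
  rw [Fin.sum_univ_succ (f := fun i : Fin (M+2) => (b i : ℂ) * y ^ (i:ℕ)),
    Fin.sum_univ_succ (f := fun i : Fin (M+2) => (b i : ℂ) * (ζ*y) ^ (i:ℕ))]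
  simp only [Fin.val_succ, Fin.val_zero, pow_zero, mul_one, mul_pow]
  have hterm : ∀ i : Fin (M+1), ((b i.succ : ℂ)) * (1 - ζ^((i:ℕ)+1)) * y^((i:ℕ)+1)
      = (b i.succ : ℂ) * y ^ ((i:ℕ)+1) - (b i.succ : ℂ) * (ζ^((i:ℕ)+1) * y^((i:ℕ)+1)) := by
    intro i; ring
  rw [Finset.sum_congr rfl (fun i _ => hterm i), Finset.sum_sub_distrib]
  ring

lemma ppoly_natDegree_le (M : ℕ) (ζ : ℂ) (t : Fin (M+1) → ℤ) :
    (ppoly M ζ t).natDegree ≤ M+2 := by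
  rw [ppoly]
  apply le_trans (Polynomial.natDegree_add_le _ _)
  apply max_le
  · exact Polynomial.natDegree_C_mul_X_pow_le _ _
  · exact Polynomial.natDegree_sum_le_of_forall_le _ _ (fun i _ =>
      le_trans (Polynomial.natDegree_C_mul_X_pow_le _ _) (by omega))

noncomputable def ych (M : ℕ) (ζ : ℂ) (b : Fin (M+2) → ℤ) : ℂ :=
  if h : ∃ y : ℂ, hval M b y = 0 ∧ hval M b (ζ*y) = 0 then h.choose else 0

lemma countB (M T : ℕ) (ζ : ℂ) (hζ1 : ζ ≠ 1) :
    ((Fintype.piFinset (fun _ : Fin (M+2) => ibox T)).filter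
      (fun b => ∃ y : ℂ, hval M b y = 0 ∧ hval M b (ζ*y) = 0)).card
      ≤ (M+3) * (2*T+1) ^ (M+1) := by
  set S := (Fintype.piFinset (fun _ : Fin (M+2) => ibox T)).filter
      (fun b => ∃ y : ℂ, hval M b y = 0 ∧ hval M b (ζ*y) = 0) with hS
  set tl : (Fin (M+2) → ℤ) → (Fin (M+1) → ℤ) := fun b (i : Fin (M+1)) => b i.succ with htl
  set S1 := S.filter (fun b => ppoly M ζ (tl b) ≠ 0) with hS1
  set S2 := S.filter (fun b => ¬ ppoly M ζ (tl b) ≠ 0) with hS2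
  have hsplit : S.card ≤ S1.card + S2.card := by
    rw [hS1, hS2, Finset.card_filter_add_card_filter_not (p := fun b => ppoly M ζ (tl b) ≠ 0)]
  have hbound1 : S1.card ≤ (M+2) * (2*T+1) ^ (M+1) := by
    have := Finset.card_le_mul_card_image_of_maps_to (f := tl) (s := S1)
      (t := Fintype.piFinset (fun _ : Fin (M+1) => ibox T)) ?_ (M+2) ?_
    · apply le_trans this
      rw [Fintype.card_piFinset, Finset.prod_const, Finset.card_univ, Fintype.card_fin, card_ibox]
    · intro b hb
      rw [Fintype.mem_piFinset]
      intro i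
      have hmem := Finset.mem_filter.1 (Finset.mem_filter.1 hb).1
      exact (Fintype.mem_piFinset.1 hmem.1) i.succ
    · intro t ht
      -- fiber over t injects into roots of ppoly M ζ t
      apply le_trans (Finset.card_le_card_of_injOn (fun b => ych M ζ b)
        (t := (ppoly M ζ t).roots.toFinset) ?_ ?_)
      · exact le_trans (Multiset.toFinset_card_le _)
          (le_trans (Polynomial.card_roots' _) (ppoly_natDegree_le M ζ t))
      · intro b hb
        obtain ⟨hbS1, hbt⟩ := Finset.mem_filter.1 hb
        obtain ⟨hbS, hbp⟩ := Finset.mem_filter.1 hbS1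
        have hex := (Finset.mem_filter.1 hbS).2
        have hy := hex.choose_spec
        have hych : ych M ζ b = hex.choose := by rw [ych, dif_pos hex]
        have hroot : (ppoly M ζ (tl b)).eval (ych M ζ b) = 0 := by
          calc (ppoly M ζ (tl b)).eval (ych M ζ b)
              = hval M b (ych M ζ b) - hval M b (ζ * ych M ζ b) := ppoly_eval M ζ b _
            _ = 0 := by rw [hych, hy.1, hy.2, sub_zero]
        rw [Finset.mem_coe, Multiset.mem_toFinset, Polynomial.mem_roots (by rw [← hbt]; exact hbp)]
        show (ppoly M ζ t).eval (ych M ζ b) = 0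
        rw [← hbt]; exact hroot
      · intro b1 hb1 b2 hb2 heq
        obtain ⟨hb1S1, hb1t⟩ := Finset.mem_filter.1 hb1
        obtain ⟨hb2S1, hb2t⟩ := Finset.mem_filter.1 hb2
        have hex1 := (Finset.mem_filter.1 (Finset.mem_filter.1 hb1S1).1).2
        have hex2 := (Finset.mem_filter.1 (Finset.mem_filter.1 hb2S1).1).2
        have hy1 := hex1.choose_spec
        have hy2 := hex2.choose_spec
        have hych1 : ych M ζ b1 = hex1.choose := by rw [ych, dif_pos hex1]
        have hych2 : ych M ζ b2 = hex2.choose := by rw [ych, dif_pos hex2]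
        have heq' : ych M ζ b1 = ych M ζ b2 := heq
        have hyy : hex1.choose = hex2.choose := by rw [← hych1, ← hych2, heq']
        have e1 := hy1.1
        have e2 := hy2.1
        rw [hval_split] at e1 e2
        have ht12 : (fun i : Fin (M+1) => b1 i.succ) = (fun i : Fin (M+1) => b2 i.succ) := by
          rw [show (fun i : Fin (M+1) => b1 i.succ) = tl b1 from rfl, hb1t,
            show (fun i : Fin (M+1) => b2 i.succ) = tl b2 from rfl, hb2t]
        have h0 : b1 0 = b2 0 := by
          have e1' : (b1 0 : ℂ) = -(hex1.choose ^ (M+2)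
              + ∑ i : Fin (M+1), (b1 i.succ : ℂ) * hex1.choose ^ ((i:ℕ)+1)) :=
            eq_neg_of_add_eq_zero_left e1
          have e2' : (b2 0 : ℂ) = -(hex2.choose ^ (M+2)
              + ∑ i : Fin (M+1), (b2 i.succ : ℂ) * hex2.choose ^ ((i:ℕ)+1)) :=
            eq_neg_of_add_eq_zero_left e2
          rw [hyy] at e1'
          rw [show (∑ i : Fin (M+1), (b1 i.succ : ℂ) * hex2.choose ^ ((i:ℕ)+1))
            = (∑ i : Fin (M+1), (b2 i.succ : ℂ) * hex2.choose ^ ((i:ℕ)+1)) by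
              exact Finset.sum_congr rfl (fun i _ => by rw [congrFun ht12 i])] at e1'
          exact_mod_cast e1'.trans e2'.symm
        funext i
        refine Fin.cases h0 (fun j => ?_) i
        exact congrFun ht12 j
  have hbound2 : S2.card ≤ (2*T+1) ^ (M+1) := by
    have := Finset.card_le_mul_card_image_of_maps_to (f := tl) (s := S2)
      (t := (Fintype.piFinset (fun _ : Fin (M+1) => ibox T)).filter (fun t => t 0 = 0))
      ?_ (2*T+1) ?_
    · apply le_trans this
      have hcard : ((Fintype.piFinset (fun _ : Fin (M+1) => ibox T)).filter
          (fun t => t 0 = 0)).card ≤ (2*T+1) ^ M := by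
        refine card_det _ ?_ (fun _ => 0) ?_
        · intro t ht i
          exact (Fintype.mem_piFinset.1 (Finset.mem_filter.1 ht).1) i
        · intro t ht
          have := (Finset.mem_filter.1 ht).2
          rw [this]; simp
      calc (2*T+1) * ((Fintype.piFinset (fun _ : Fin (M+1) => ibox T)).filter
            (fun t => t 0 = 0)).card ≤ (2*T+1) * (2*T+1)^M := by
            exact Nat.mul_le_mul_left _ hcard
        _ = (2*T+1) ^ (M+1) := by ring
    · -- maps to: the coefficient of X^1 of ppoly is t 0 * (1 - ζ), so t 0 = 0
      intro b hb
      obtain ⟨hbS, hbp'⟩ := Finset.mem_filter.1 hb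
      have hbp : ppoly M ζ (tl b) = 0 := not_not.1 hbp'
      rw [Finset.mem_filter]
      constructor
      · rw [Fintype.mem_piFinset]
        intro i
        exact (Fintype.mem_piFinset.1 (Finset.mem_filter.1 hbS).1) i.succ
      · have hcoeff := congrArg (fun p => Polynomial.coeff p 1) hbp
        simp only [Polynomial.coeff_zero] at hcoeff
        rw [ppoly] at hcoeff
        simp only [Polynomial.coeff_add, Polynomial.finset_sum_coeff,
          Polynomial.coeff_C_mul, Polynomial.coeff_X_pow] at hcoeff
        rw [Fin.sum_univ_succ] at hcoeff
        simp only [Fin.val_succ, Fin.val_zero] at hcoeff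
        have hz : ∀ i : Fin M, ((tl b i.succ : ℂ) * (1 - ζ^((i:ℕ)+1+1)))
            * (if (1:ℕ) = (i:ℕ)+1+1 then (1:ℂ) else 0) = 0 := by
          intro i
          rw [if_neg (by omega)]
          ring
        rw [Finset.sum_congr rfl (fun i _ => hz i)] at hcoeff
        simp only [Finset.sum_const_zero, add_zero, if_neg (show (1:ℕ) ≠ M+2 by omega)] at hcoeff
        have : (tl b 0 : ℂ) * (1 - ζ) = 0 := by
          simpa using hcoeff
        rcases mul_eq_zero.1 this with h | h
        · exact_mod_cast h
        · exact absurd (by linear_combination -h : ζ = 1) hζ1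
    · intro t ht
      -- fiber: b 0 ranges over ibox T
      apply le_trans (Finset.card_le_card_of_injOn (fun b => b 0) (t := ibox T) ?_ ?_)
      · rw [card_ibox]
      · intro b hb
        have hmem := (Finset.mem_filter.1 (Finset.mem_filter.1 (Finset.mem_filter.1 hb).1).1).1
        exact (Fintype.mem_piFinset.1 hmem) 0
      · intro b1 hb1 b2 hb2 heq
        have h1t := (Finset.mem_filter.1 hb1).2
        have h2t := (Finset.mem_filter.1 hb2).2
        funext i
        refine Fin.cases heq (fun j => ?_) i
        have : tl b1 j = tl b2 j := by rw [h1t, h2t]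
        exact this
  calc S.card ≤ S1.card + S2.card := hsplit
    _ ≤ (M+2) * (2*T+1) ^ (M+1) + (2*T+1) ^ (M+1) := Nat.add_le_add hbound1 hbound2
    _ = (M+3) * (2*T+1) ^ (M+1) := by ring

lemma countG (M T : ℕ) (Zf : Finset ℂ) (w : ℂ) :
    ((Fintype.piFinset (fun _ : Fin (M+2) => ibox T)).filter
      (fun b => ∃ ζ ∈ Zf, hval M b (ζ * w) = 0 ∨
        (ζ ≠ 1 ∧ ∃ y : ℂ, hval M b y = 0 ∧ hval M b (ζ*y) = 0))).card
      ≤ Zf.card * ((M+4) * (2*T+1)^(M+1)) := by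
  set pi := Fintype.piFinset (fun _ : Fin (M+2) => ibox T) with hpi
  have hsub : pi.filter (fun b => ∃ ζ ∈ Zf, hval M b (ζ * w) = 0 ∨
        (ζ ≠ 1 ∧ ∃ y : ℂ, hval M b y = 0 ∧ hval M b (ζ*y) = 0))
      ⊆ Zf.biUnion (fun ζ => pi.filter (fun b => hval M b (ζ * w) = 0 ∨
        (ζ ≠ 1 ∧ ∃ y : ℂ, hval M b y = 0 ∧ hval M b (ζ*y) = 0))) := by
    intro b hb
    obtain ⟨hbpi, ζ, hζZ, hP⟩ := Finset.mem_filter.1 hb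
    exact Finset.mem_biUnion.2 ⟨ζ, hζZ, Finset.mem_filter.2 ⟨hbpi, hP⟩⟩
  apply le_trans (Finset.card_le_card hsub)
  apply le_trans (Finset.card_biUnion_le)
  apply le_trans (Finset.sum_le_sum (g := fun _ => (M+4) * (2*T+1)^(M+1)) ?_)
  · rw [Finset.sum_const, smul_eq_mul]
  · intro ζ _
    rw [Finset.filter_or]
    apply le_trans (Finset.card_union_le _ _)
    have h1 : (pi.filter (fun b => hval M b (ζ * w) = 0)).card ≤ (2*T+1)^(M+1) := countA M T _
    have h2 : (pi.filter (fun b => ζ ≠ 1 ∧ ∃ y : ℂ, hval M b y = 0 ∧ hval M b (ζ*y) = 0)).card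
        ≤ (M+3) * (2*T+1)^(M+1) := by
      by_cases hζ1 : ζ = 1
      · rw [Finset.filter_false_of_mem (fun b _ => by simp [hζ1])]
        simp
      · apply le_trans (Finset.card_le_card (show _ ⊆ pi.filter
            (fun b => ∃ y : ℂ, hval M b y = 0 ∧ hval M b (ζ*y) = 0) from fun b hb =>
            Finset.mem_filter.2 ⟨(Finset.mem_filter.1 hb).1, (Finset.mem_filter.1 hb).2.2⟩))
        rw [hpi]
        exact countB M T ζ hζ1
    show _ ≤ (M+4) * (2*T+1)^(M+1)
    refine le_trans (Nat.add_le_add h1 h2) (le_of_eq ?_)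
    ring



lemma coeff_rel_zero (a : ℤ) (h : Polynomial ℤ) :
    ((X - C a) * h).coeff 0 = -(a * h.coeff 0) := by
  rw [sub_mul, Polynomial.coeff_sub, Polynomial.coeff_C_mul, Polynomial.mul_coeff_zero]
  simp

lemma coeff_rel (a : ℤ) (h : Polynomial ℤ) (j : ℕ) :
    ((X - C a) * h).coeff (j+1) = h.coeff j - a * h.coeff (j+1) := by
  rw [sub_mul, Polynomial.coeff_sub, Polynomial.coeff_C_mul, Polynomial.coeff_X_mul]

lemma coeff_bound (a : ℤ) (h : Polynomial ℤ) (m : ℕ) (hmon : h.Monic) (hdeg : h.natDegree = m)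
    (H : ℤ) (hH : 1 ≤ H) (hc : ∀ i, |((X - C a) * h).coeff i| ≤ H) :
    ∀ j, |h.coeff j| * max 1 |a| ≤ 2*(m+1)*H := by
  have hcm : h.coeff m = 1 := by rw [← hdeg]; exact hmon.coeff_natDegree
  rcases le_or_gt |a| 1 with ha | ha
  · -- |a| ≤ 1
    have hmax : max 1 |a| = 1 := max_eq_left ha
    rw [hmax]
    have claim : ∀ d j, j + d = m → |h.coeff j| ≤ (d+1)*H := by
      intro d
      induction d with
      | zero => intro j hj; simp only [Nat.add_zero] at hj; subst hj
                rw [hcm]; simpa using hH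
      | succ d ih =>
        intro j hj
        have hrel := coeff_rel a h j
        have h1 : h.coeff j = ((X - C a) * h).coeff (j+1) + a * h.coeff (j+1) := by
          rw [hrel]; ring
        have h2 := hc (j+1)
        have h3 : |h.coeff (j+1)| ≤ (d+1)*H := ih (j+1) (by omega)
        have h4 : |a * h.coeff (j+1)| ≤ (d+1)*H := by
          rw [abs_mul]
          nlinarith [abs_nonneg (h.coeff (j+1)), abs_nonneg a]
        calc |h.coeff j| ≤ |((X - C a) * h).coeff (j+1)| + |a * h.coeff (j+1)| := by
              rw [h1]; exact abs_add_le _ _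
          _ ≤ (d+1+1)*H := by linarith
    intro j
    rcases le_or_gt j m with hj | hj
    · have := claim (m - j) j (by omega)
      have hd : ((m:ℤ) - j + 1) * H ≤ 2*(m+1)*H := by
        have : ((m:ℤ) - j) ≤ m := by
          have : (0:ℤ) ≤ j := Int.natCast_nonneg j
          omega
        nlinarith
      calc |h.coeff j| * 1 = |h.coeff j| := by ring
        _ ≤ ((m - j : ℕ) + 1) * H := this
        _ ≤ 2*(m+1)*H := by
          push_cast [Nat.cast_sub hj] at *
          linarith
    · rw [Polynomial.coeff_eq_zero_of_natDegree_lt (by omega)]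
      simp
      positivity
  · -- 2 ≤ |a|
    have ha2 : 2 ≤ |a| := ha
    have hmax : max 1 |a| = |a| := max_eq_right (by omega)
    rw [hmax]
    have claim : ∀ j, |h.coeff j| * |a| ≤ 2*H := by
      intro j
      induction j with
      | zero =>
        have h0 := coeff_rel_zero a h
        have := hc 0
        rw [h0, abs_neg, abs_mul] at this
        calc |h.coeff 0| * |a| = |a| * |h.coeff 0| := by ring
          _ ≤ H := this
          _ ≤ 2*H := by linarith
      | succ j ih =>
        have hj : |h.coeff j| ≤ H := by nlinarith [abs_nonneg (h.coeff j)]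
        have hrel := coeff_rel a h j
        have h1 : a * h.coeff (j+1) = h.coeff j - ((X - C a) * h).coeff (j+1) := by
          rw [hrel]; ring
        have h2 := hc (j+1)
        calc |h.coeff (j+1)| * |a| = |a * h.coeff (j+1)| := by rw [abs_mul]; ring
          _ = |h.coeff j - ((X - C a) * h).coeff (j+1)| := by rw [h1]
          _ ≤ |h.coeff j| + |((X - C a) * h).coeff (j+1)| := abs_sub _ _
          _ ≤ 2*H := by linarith
    intro j
    calc |h.coeff j| * |a| ≤ 2*H := claim j
      _ ≤ 2*(m+1)*H := by nlinarith

lemma int_root_of_linear (f : Polynomial ℤ) (hmon : f.Monic) (q : Polynomial ℚ)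
    (hq : q.degree = 1) (hdvd : q ∣ f.map (Int.castRingHom ℚ)) :
    ∃ a : ℤ, f.eval a = 0 := by
  have hq1 : q.coeff 1 ≠ 0 := by
    have : q.natDegree = 1 := Polynomial.natDegree_eq_of_degree_eq_some hq
    rw [← this]
    exact Polynomial.leadingCoeff_ne_zero.2 (fun h0 => by simp [h0] at hq)
  set r : ℚ := -q.coeff 0 / q.coeff 1 with hr
  have hqr : q.eval r = 0 := by
    conv_lhs => rw [Polynomial.eq_X_add_C_of_degree_le_one (le_of_eq hq)]
    simp only [Polynomial.eval_add, Polynomial.eval_mul, Polynomial.eval_C, Polynomial.eval_X]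
    rw [hr]
    field_simp
    ring
  have hfr : (f.map (Int.castRingHom ℚ)).eval r = 0 := by
    obtain ⟨g, hg⟩ := hdvd
    rw [hg, Polynomial.eval_mul, hqr, zero_mul]
  have hint : IsIntegral ℤ r := by
    refine ⟨f, hmon, ?_⟩
    rw [Polynomial.eval₂_eq_eval_map]
    exact hfr
  obtain ⟨a, ha⟩ := IsIntegrallyClosed.isIntegral_iff.1 hint
  refine ⟨a, ?_⟩
  have : Polynomial.aeval ((algebraMap ℤ ℚ) a) f = 0 := by
    rw [Polynomial.aeval_def, Polynomial.eval₂_eq_eval_map, ha]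
    exact hfr
  rw [Polynomial.aeval_algebraMap_apply] at this
  have h2 : (Polynomial.aeval a) f = 0 := by
    have : ((Polynomial.aeval a f : ℤ) : ℚ) = 0 := this
    exact_mod_cast this
  simpa [Polynomial.aeval_def, Polynomial.eval₂_at_apply] using h2


lemma sum_inv_sq (A : ℕ) :
    ∑ a ∈ Finset.Icc (-(A:ℤ)-1) ((A:ℤ)+1), (((max 1 |a| : ℤ) : ℝ))⁻¹^2 ≤ 5 - 2/((A:ℝ)+1) := by
  induction A with
  | zero =>
    simp only [Nat.cast_zero]
    rw [show Finset.Icc (-(0:ℤ)-1) ((0:ℤ)+1) = {-1, 0, 1} from by decide]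
    norm_num
  | succ A ih =>
    have hicc : Finset.Icc (-(A+1:ℕ)-1 : ℤ) ((A+1:ℕ)+1 : ℤ)
        = insert (-(A:ℤ)-2) (insert ((A:ℤ)+2) (Finset.Icc (-(A:ℤ)-1) ((A:ℤ)+1))) := by
      ext x
      simp only [Finset.mem_Icc, Finset.mem_insert]
      push_cast
      omega
    rw [hicc, Finset.sum_insert (by simp only [Finset.mem_insert, Finset.mem_Icc]; omega),
      Finset.sum_insert (by simp only [Finset.mem_Icc]; omega)]
    have hm1 : max 1 |(-(A:ℤ)-2)| = (A:ℤ)+2 := by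
      rw [show (-(A:ℤ)-2) = -((A:ℤ)+2) by ring, abs_neg, abs_of_nonneg (by positivity)]
      exact max_eq_right (by omega)
    have hm2 : max 1 |((A:ℤ)+2)| = (A:ℤ)+2 := by
      rw [abs_of_nonneg (by positivity)]
      exact max_eq_right (by omega)
    rw [hm1, hm2]
    have hA2 : (0:ℝ) < (A:ℝ)+2 := by positivity
    have hA1 : (0:ℝ) < (A:ℝ)+1 := by positivity
    have hterm : ((((A:ℤ)+2 : ℤ) : ℝ))⁻¹^2 = ((A:ℝ)+2)⁻¹^2 := by push_cast; ring
    rw [hterm]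
    have hkey : 2*((A:ℝ)+2)⁻¹^2 + 2/((A:ℝ)+2) ≤ 2/((A:ℝ)+1) := by
      rw [inv_eq_one_div, div_pow, one_pow, mul_one_div,
        div_add_div _ _ (by positivity) hA2.ne', div_le_div_iff₀ (by positivity) hA1]
      nlinarith
    push_cast
    rw [show ((A:ℝ)+1+1) = (A:ℝ)+2 from by ring]
    push_cast at ih
    linarith

noncomputable def rootOf (f : Polynomial ℤ) : ℤ :=
  if hf : ∃ a : ℤ, f.eval a = 0 then hf.choose else 0

lemma rootOf_spec {f : Polynomial ℤ} (hf : ∃ a : ℤ, f.eval a = 0) : f.eval (rootOf f) = 0 := by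
  rw [rootOf, dif_pos hf]; exact hf.choose_spec

noncomputable def quotOf (f : Polynomial ℤ) : Polynomial ℤ := f /ₘ (X - C (rootOf f))

lemma quotOf_eq {f : Polynomial ℤ} (hf : f.eval (rootOf f) = 0) :
    (X - C (rootOf f)) * quotOf f = f := mul_divByMonic_eq_iff_isRoot.2 hf

lemma aeval_eq_hval (M : ℕ) (h : Polynomial ℤ) (hmon : h.Monic) (hdeg : h.natDegree = M+2)
    (γ : ℂ) : Polynomial.aeval γ h = hval M (fun i : Fin (M+2) => h.coeff i) γ := by
  conv_lhs => rw [hmon.as_sum]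
  rw [hdeg]
  simp only [map_add, map_pow, Polynomial.aeval_X, map_sum, map_mul, Polynomial.aeval_C,
    algebraMap_int_eq, eq_intCast, map_intCast]
  rw [hval, ← Fin.sum_univ_eq_sum_range (fun i => ((h.coeff i : ℤ) : ℂ) * γ^i) (M+2)]

/-- A polynomial `f ∈ ℤ[X]` is degenerate if it has two distinct complex roots whose
quotient is a root of unity. -/
def IsDegenerate (f : Polynomial ℤ) : Prop :=
  ∃ α β : ℂ, (Polynomial.aeval α f = 0) ∧ (Polynomial.aeval β f = 0) ∧ α ≠ β ∧
    ∃ k : ℕ, 0 < k ∧ (α / β) ^ k = 1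

set_option maxHeartbeats 1000000 in
/-- For fixed `n ≥ 4`, the number of monic degenerate integer polynomials of degree `n`
and height at most `H` having a linear factor over `ℚ` is `O(H^{n-2})`. -/
theorem degenerate_with_linear_factor_upper (n : ℕ) (hn : 4 ≤ n) :
    ∃ C : ℝ, 0 < C ∧ ∀ H : ℕ, 2 ≤ H →
      ({f : Polynomial ℤ | f.Monic ∧ f.natDegree = n ∧ IsDegenerate f ∧
          (∀ i, |f.coeff i| ≤ (H : ℤ)) ∧
          ∃ q : Polynomial ℚ, q.degree = 1 ∧ q ∣ f.map (Int.castRingHom ℚ)}.ncard : ℝ) ≤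
        C * (H : ℝ) ^ (n - 2) := by
  obtain ⟨M, rfl⟩ : ∃ M : ℕ, n = M + 3 := ⟨n - 3, by omega⟩
  obtain ⟨L, hL0, hL⟩ := ratio_bound (M+3) (by omega)
  set Zf : Finset ℂ := (Polynomial.nthRoots L (1:ℂ)).toFinset with hZf
  have hZmem : ∀ z : ℂ, z ^ L = 1 → z ∈ Zf := fun z hz =>
    Multiset.mem_toFinset.2 ((Polynomial.mem_nthRoots hL0).2 hz)
  have hZpos : 0 < Zf.card := Finset.card_pos.2 ⟨1, hZmem 1 (one_pow L)⟩
  set c₁ : ℕ := Zf.card * (M+4) with hc₁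
  have hc₁pos : 0 < c₁ := Nat.mul_pos hZpos (by omega)
  refine ⟨(c₁ : ℝ) * (6*(M+3):ℝ)^(M+1) * 5, by
    apply mul_pos (mul_pos (by exact_mod_cast hc₁pos) (by positivity)) (by norm_num),
    fun H hH => ?_⟩
  have hHpos : (0:ℝ) < H := by positivity
  have hHZ : (1:ℤ) ≤ (H:ℤ) := by exact_mod_cast (by omega : 1 ≤ H)
  -- constants
  set Cb : ℤ := 2*(M+3)*(H:ℤ) with hCb
  have hCbpos : 0 < Cb := by positivity
  set Anat : ℕ := 2*(M+3)*H with hAnat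
  have hAeq : (Anat : ℤ) = Cb := by rw [hAnat, hCb]; push_cast; ring
  have hApos : 1 ≤ Anat := by rw [hAnat]; nlinarith
  set T : ℤ → ℕ := fun a => (Cb / max 1 |a|).toNat with hT
  classical
  set pred : ℤ → (Fin (M+2) → ℤ) → Prop := fun a b => ∃ ζ ∈ Zf,
    hval M b (ζ * (a:ℂ)) = 0 ∨ (ζ ≠ 1 ∧ ∃ y : ℂ, hval M b y = 0 ∧ hval M b (ζ*y) = 0) with hpred
  set G : ℤ → Finset (Fin (M+2) → ℤ) := fun a =>
    (Fintype.piFinset (fun _ : Fin (M+2) => ibox (T a))).filter (pred a) with hG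
  set 𝒰 : Finset (ℤ × (Fin (M+2) → ℤ)) :=
    (Finset.Icc (-(Anat:ℤ)) (Anat:ℤ)).biUnion (fun a => {a} ×ˢ G a) with h𝒰
  set Φ : Polynomial ℤ → ℤ × (Fin (M+2) → ℤ) :=
    fun f => (rootOf f, fun i => (quotOf f).coeff i) with hΦ
  set S : Set (Polynomial ℤ) := {f : Polynomial ℤ | f.Monic ∧ f.natDegree = M+3 ∧
    IsDegenerate f ∧ (∀ i, |f.coeff i| ≤ (H : ℤ)) ∧
    ∃ q : Polynomial ℚ, q.degree = 1 ∧ q ∣ f.map (Int.castRingHom ℚ)} with hS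
  -- basic facts about members of S
  have hfacts : ∀ f ∈ S, f.eval (rootOf f) = 0 ∧ (quotOf f).Monic ∧
      (quotOf f).natDegree = M+2 ∧ f = (X - C (rootOf f)) * quotOf f := by
    intro f hf
    obtain ⟨hmon, hdeg, _, hcoef, q, hq, hdvd⟩ := hf
    have hex : ∃ a : ℤ, f.eval a = 0 := int_root_of_linear f hmon q hq hdvd
    have hroot := rootOf_spec hex
    have hfeq : f = (X - C (rootOf f)) * quotOf f := (quotOf_eq hroot).symm
    have hmonh : (quotOf f).Monic := (monic_X_sub_C (rootOf f)).of_mul_monic_left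
      (by rw [← hfeq]; exact hmon)
    have hdegh : (quotOf f).natDegree = M+2 := by
      have := (monic_X_sub_C (rootOf f)).natDegree_mul hmonh
      rw [← hfeq, hdeg, Polynomial.natDegree_X_sub_C] at this
      omega
    exact ⟨hroot, hmonh, hdegh, hfeq⟩
  -- coefficient bounds
  have hcb : ∀ f ∈ S, ∀ j, |(quotOf f).coeff j| * max 1 |rootOf f| ≤ Cb := by
    intro f hf j
    obtain ⟨hroot, hmonh, hdegh, hfeq⟩ := hfacts f hf
    obtain ⟨hmon, hdeg, _, hcoef, _⟩ := hf
    have := coeff_bound (rootOf f) (quotOf f) (M+2) hmonh hdegh (H:ℤ) hHZ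
      (fun i => by rw [← hfeq]; exact hcoef i) j
    calc |(quotOf f).coeff j| * max 1 |rootOf f| ≤ 2*((M+2)+1)*(H:ℤ) := this
      _ = Cb := by rw [hCb]; ring
  have hrange : ∀ f ∈ S, max 1 |rootOf f| ≤ Cb := by
    intro f hf
    obtain ⟨hroot, hmonh, hdegh, hfeq⟩ := hfacts f hf
    have := hcb f hf (M+2)
    rw [← hdegh, hmonh.coeff_natDegree] at this
    simpa using this
  -- membership of the image
  have hmem : ∀ f ∈ S, Φ f ∈ 𝒰 := by
    intro f hf
    obtain ⟨hroot, hmonh, hdegh, hfeq⟩ := hfacts f hf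
    obtain ⟨hmon, hdeg, hdegen, hcoef, -⟩ := id hf
    set a : ℤ := rootOf f with ha
    have hmaxpos : (0:ℤ) < max 1 |a| := by positivity
    have hTa : ((T a : ℕ) : ℤ) = Cb / max 1 |a| :=
      Int.toNat_of_nonneg (Int.ediv_nonneg hCbpos.le (by positivity))
    rw [h𝒰, Finset.mem_biUnion]
    refine ⟨a, ?_, ?_⟩
    · rw [Finset.mem_Icc, hAeq]
      have := hrange f hf
      have h1 : |a| ≤ Cb := le_trans (le_max_right 1 _) this
      exact abs_le.1 h1
    · rw [Finset.mem_product]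
      refine ⟨Finset.mem_singleton_self a, ?_⟩
      rw [hG, Finset.mem_filter]
      constructor
      · rw [Fintype.mem_piFinset]
        intro i
        have hle : |(quotOf f).coeff i| ≤ (T a : ℤ) := by
          rw [hTa, Int.le_ediv_iff_mul_le hmaxpos]
          exact hcb f hf i
        rw [Finset.mem_Icc]
        constructor
        · linarith [(abs_le.1 hle).1]
        · exact (abs_le.1 hle).2
      · -- the degeneracy predicate
        set b : Fin (M+2) → ℤ := fun i => (quotOf f).coeff i with hb
        have hbridge : ∀ γ : ℂ, Polynomial.aeval γ (quotOf f) = hval M b γ :=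
          aeval_eq_hval M (quotOf f) hmonh hdegh
        have hfactor : ∀ γ : ℂ, Polynomial.aeval γ f = (γ - (a:ℂ)) * hval M b γ := by
          intro γ
          conv_lhs => rw [hfeq]
          rw [map_mul, map_sub, Polynomial.aeval_X, Polynomial.aeval_C, ← hbridge]
          norm_num
        obtain ⟨α, β, hα, hβ, hαβ, k, hk, hpow⟩ := hdegen
        have hζL : (α/β)^L = 1 := hL f α β k hmon hdeg hα hβ hk hpow
        set ζ : ℂ := α / β with hζ
        have hζ0 : ζ ≠ 0 := by
          intro h0; rw [h0] at hpow; simp [zero_pow hk.ne'] at hpow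
        have hβ0 : β ≠ 0 := by intro h; rw [h] at hζ; simp [hζ] at hζ0
        have hα0 : α ≠ 0 := by intro h; rw [h] at hζ; simp [hζ] at hζ0
        have hζ1 : ζ ≠ 1 := fun h => hαβ ((div_eq_one_iff_eq hβ0).1 h)
        have hζZ : ζ ∈ Zf := hZmem ζ hζL
        have hζiZ : ζ⁻¹ ∈ Zf := hZmem _ (by rw [inv_pow, hζL, inv_one])
        have hcα : α = (a:ℂ) ∨ hval M b α = 0 := by
          have := hfactor α
          rw [hα] at this
          rcases mul_eq_zero.1 this.symm with h | h
          · left; linear_combination h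
          · right; exact h
        have hcβ : β = (a:ℂ) ∨ hval M b β = 0 := by
          have := hfactor β
          rw [hβ] at this
          rcases mul_eq_zero.1 this.symm with h | h
          · left; linear_combination h
          · right; exact h
        rw [hpred]
        rcases hcα with hαa | hαh
        · rcases hcβ with hβa | hβh
          · exact absurd (hαa.trans hβa.symm) hαβ
          · refine ⟨ζ⁻¹, hζiZ, Or.inl ?_⟩
            have : ζ⁻¹ * (a:ℂ) = β := by
              rw [← hαa, hζ, inv_div, div_mul_cancel₀ _ hα0]
            rw [this]; exact hβh
        · rcases hcβ with hβa | hβh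
          · refine ⟨ζ, hζZ, Or.inl ?_⟩
            have : ζ * (a:ℂ) = α := by
              rw [← hβa, hζ, div_mul_cancel₀ _ hβ0]
            rw [this]; exact hαh
          · refine ⟨ζ, hζZ, Or.inr ⟨hζ1, β, hβh, ?_⟩⟩
            have : ζ * β = α := by rw [hζ, div_mul_cancel₀ _ hβ0]
            rw [this]; exact hαh
  -- injectivity
  have hinj : Set.InjOn Φ S := by
    intro f1 h1 f2 h2 heq
    obtain ⟨hroot1, hmon1, hdeg1, hfeq1⟩ := hfacts f1 h1
    obtain ⟨hroot2, hmon2, hdeg2, hfeq2⟩ := hfacts f2 h2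
    have ha : rootOf f1 = rootOf f2 := congrArg Prod.fst heq
    have hbf : (fun i : Fin (M+2) => (quotOf f1).coeff i)
        = (fun i : Fin (M+2) => (quotOf f2).coeff i) := congrArg Prod.snd heq
    have hcoeffs : ∀ i ∈ Finset.range (M+2), (quotOf f1).coeff i = (quotOf f2).coeff i := by
      intro i hi
      have := congrFun hbf ⟨i, Finset.mem_range.1 hi⟩
      simpa using this
    have hq12 : quotOf f1 = quotOf f2 := by
      conv_lhs => rw [hmon1.as_sum]
      conv_rhs => rw [hmon2.as_sum]
      rw [hdeg1, hdeg2]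
      congr 1
      exact Finset.sum_congr rfl (fun i hi => by rw [hcoeffs i hi])
    rw [hfeq1, hfeq2, ha, hq12]
  -- counting
  have hcount : (S.ncard : ℝ) ≤ (𝒰.card : ℝ) := by
    have h1 : S.ncard = (Φ '' S).ncard := (Set.ncard_image_of_injOn hinj).symm
    have h2 : (Φ '' S).ncard ≤ 𝒰.card := by
      rw [← Set.ncard_coe_finset 𝒰]
      refine Set.ncard_le_ncard ?_ 𝒰.finite_toSet
      rintro x ⟨f, hf, rfl⟩
      exact hmem f hf
    rw [h1]
    exact_mod_cast h2
  refine le_trans hcount ?_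
  -- bound the cardinality of 𝒰
  have hGcard : ∀ a : ℤ, (G a).card ≤ c₁ * (2*(T a)+1)^(M+1) := by
    intro a
    have := countG M (T a) Zf ((a:ℤ):ℂ)
    rw [hG]
    calc ((Fintype.piFinset (fun _ : Fin (M+2) => ibox (T a))).filter (pred a)).card
        ≤ Zf.card * ((M+4) * (2*(T a)+1)^(M+1)) := this
      _ = c₁ * (2*(T a)+1)^(M+1) := by rw [hc₁]; ring
  have hUcard : (𝒰.card : ℝ) ≤ ∑ a ∈ Finset.Icc (-(Anat:ℤ)) (Anat:ℤ),
      (c₁ : ℝ) * ((2*(T a)+1 : ℕ) : ℝ)^(M+1) := by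
    rw [h𝒰]
    calc (((Finset.Icc (-(Anat:ℤ)) (Anat:ℤ)).biUnion (fun a => {a} ×ˢ G a)).card : ℝ)
        ≤ ((∑ a ∈ Finset.Icc (-(Anat:ℤ)) (Anat:ℤ), ({a} ×ˢ G a).card : ℕ) : ℝ) := by
          exact_mod_cast Finset.card_biUnion_le
      _ = ∑ a ∈ Finset.Icc (-(Anat:ℤ)) (Anat:ℤ), ((({a} : Finset ℤ) ×ˢ G a).card : ℝ) := by
          push_cast; rfl
      _ ≤ ∑ a ∈ Finset.Icc (-(Anat:ℤ)) (Anat:ℤ), (c₁ : ℝ) * ((2*(T a)+1 : ℕ) : ℝ)^(M+1) := by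
          apply Finset.sum_le_sum
          intro a _
          rw [Finset.card_product, Finset.card_singleton, one_mul]
          exact_mod_cast hGcard a
  refine le_trans hUcard ?_
  -- per-term real estimate
  have hterm : ∀ a ∈ Finset.Icc (-(Anat:ℤ)) (Anat:ℤ),
      (c₁ : ℝ) * ((2*(T a)+1 : ℕ) : ℝ)^(M+1) ≤
      (c₁ : ℝ) * (3*(Cb:ℝ))^(M+1) * (((max 1 |a| : ℤ):ℝ))⁻¹^2 := by
    intro a ha
    have hmaxpos : (0:ℤ) < max 1 |a| := by positivity
    have hmaxR : (0:ℝ) < ((max 1 |a| : ℤ):ℝ) := by exact_mod_cast hmaxpos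
    have hmaxCb : ((max 1 |a| : ℤ):ℝ) ≤ (Cb:ℝ) := by
      rw [Finset.mem_Icc, hAeq] at ha
      have h1 : |a| ≤ Cb := by rw [abs_le]; omega
      exact_mod_cast le_trans (max_le (by omega) h1) le_rfl
    have hTa : ((T a : ℕ) : ℤ) = Cb / max 1 |a| :=
      Int.toNat_of_nonneg (Int.ediv_nonneg hCbpos.le (by positivity))
    have hTle : ((T a : ℕ) : ℝ) ≤ (Cb:ℝ) / ((max 1 |a| : ℤ):ℝ) := by
      rw [le_div_iff₀ hmaxR]
      have hint : ((T a : ℕ) : ℤ) * max 1 |a| ≤ Cb := by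
        rw [hTa]; exact Int.ediv_mul_le Cb hmaxpos.ne'
      exact_mod_cast hint
    have hone : (1:ℝ) ≤ (Cb:ℝ) / ((max 1 |a| : ℤ):ℝ) := by
      rw [le_div_iff₀ hmaxR, one_mul]; exact hmaxCb
    have hbase : ((2*(T a)+1 : ℕ) : ℝ) ≤ 3*(Cb:ℝ) * (((max 1 |a| : ℤ):ℝ))⁻¹ := by
      have hcast : ((2*(T a)+1 : ℕ) : ℝ) = 2*((T a : ℕ):ℝ) + 1 := by push_cast; ring
      have hrhs : 3*(Cb:ℝ) * (((max 1 |a| : ℤ):ℝ))⁻¹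
          = 3 * ((Cb:ℝ) / ((max 1 |a| : ℤ):ℝ)) := by ring
      rw [hcast, hrhs]
      linarith
    have hpow : ((2*(T a)+1 : ℕ) : ℝ)^(M+1) ≤ (3*(Cb:ℝ) * (((max 1 |a| : ℤ):ℝ))⁻¹)^(M+1) :=
      pow_le_pow_left₀ (by positivity) hbase (M+1)
    have hsplit : (3*(Cb:ℝ) * (((max 1 |a| : ℤ):ℝ))⁻¹)^(M+1)
        = (3*(Cb:ℝ))^(M+1) * ((((max 1 |a| : ℤ):ℝ))⁻¹)^(M+1) := by
      rw [mul_pow]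
    have hinv1 : (((max 1 |a| : ℤ):ℝ))⁻¹ ≤ 1 := by
      rw [inv_le_one_iff₀]
      right
      exact_mod_cast le_max_left 1 |a|
    have hdecay : ((((max 1 |a| : ℤ):ℝ))⁻¹)^(M+1) ≤ ((((max 1 |a| : ℤ):ℝ))⁻¹)^2 :=
      pow_le_pow_of_le_one (by positivity) hinv1 (by omega)
    calc (c₁ : ℝ) * ((2*(T a)+1 : ℕ) : ℝ)^(M+1)
        ≤ (c₁ : ℝ) * ((3*(Cb:ℝ))^(M+1) * ((((max 1 |a| : ℤ):ℝ))⁻¹)^(M+1)) := by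
          apply mul_le_mul_of_nonneg_left _ (by positivity)
          rw [← hsplit]; exact hpow
      _ ≤ (c₁ : ℝ) * ((3*(Cb:ℝ))^(M+1) * ((((max 1 |a| : ℤ):ℝ))⁻¹)^2) := by
          apply mul_le_mul_of_nonneg_left _ (by positivity)
          exact mul_le_mul_of_nonneg_left hdecay (by positivity)
      _ = (c₁ : ℝ) * (3*(Cb:ℝ))^(M+1) * (((max 1 |a| : ℤ):ℝ))⁻¹^2 := by ring
  -- sum it up
  have hsum : ∑ a ∈ Finset.Icc (-(Anat:ℤ)) (Anat:ℤ), (((max 1 |a| : ℤ):ℝ))⁻¹^2 ≤ 5 := by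
    have hA1 : Anat = (Anat - 1) + 1 := by omega
    have hicc : Finset.Icc (-(Anat:ℤ)) (Anat:ℤ)
        = Finset.Icc (-((Anat-1 : ℕ):ℤ)-1) (((Anat-1 : ℕ):ℤ)+1) := by
      congr 1 <;> (push_cast [Nat.cast_sub (by omega : 1 ≤ Anat)]; ring)
    rw [hicc]
    refine le_trans (sum_inv_sq (Anat - 1)) ?_
    have : (0:ℝ) < ((Anat - 1 : ℕ):ℝ) + 1 := by positivity
    have h2 : 0 < 2/(((Anat - 1 : ℕ):ℝ)+1) := by positivity
    linarith
  calc ∑ a ∈ Finset.Icc (-(Anat:ℤ)) (Anat:ℤ), (c₁ : ℝ) * ((2*(T a)+1 : ℕ) : ℝ)^(M+1)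
      ≤ ∑ a ∈ Finset.Icc (-(Anat:ℤ)) (Anat:ℤ),
        (c₁ : ℝ) * (3*(Cb:ℝ))^(M+1) * (((max 1 |a| : ℤ):ℝ))⁻¹^2 := Finset.sum_le_sum hterm
    _ = (c₁ : ℝ) * (3*(Cb:ℝ))^(M+1) *
        ∑ a ∈ Finset.Icc (-(Anat:ℤ)) (Anat:ℤ), (((max 1 |a| : ℤ):ℝ))⁻¹^2 := by
        rw [Finset.mul_sum]
    _ ≤ (c₁ : ℝ) * (3*(Cb:ℝ))^(M+1) * 5 := by
        apply mul_le_mul_of_nonneg_left hsum (by positivity)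
    _ = (c₁ : ℝ) * (6*(M+3):ℝ)^(M+1) * 5 * (H:ℝ)^(M+1) := by
        have hsplit3 : (3*(Cb:ℝ)) = (6*(M+3):ℝ) * (H:ℝ) := by rw [hCb]; push_cast; ring
        rw [hsplit3, mul_pow]
        ring
    _ = (c₁ : ℝ) * (6*(M+3):ℝ)^(M+1) * 5 * (H:ℝ)^(M+3-2) := by
        have hexp : M+3-2 = M+1 := by omega
        rw [hexp]
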